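/- Let $D \subset \mathbb{C}^n$ be a domain, $z_0 \in D$, and $\eta$ a pseudometric on $D$ whose unit ball $B_\eta(z_0) = \{X : \eta(z_0; X) < 1\}$ is a bounded Reinhardt domain (i.e. invariant under $(X_1,\dots,X_n) \mapsto (\lambda_1 X_1, \dots, \lambda_n X_n)$ for all $|\lambda_j| = 1$). Then the Wu ellipsoid $B_{\widetilde{\mathbb{W}}\eta}(z_0)$ — the unique ellipsoid of minimal volume containing $B_\eta(z_0)$ — is a complete Reinhardt domain, and there exist $a_1,\dots,a_n > 0$ with $\widetilde{\mathbb{W}}\eta(z_0; X) = \big(\sum_{j=1}^n |X_j|^2/a_j\big)^{1/2}$; i.e. the minimal ellipsoid is diagonal. -/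

import Mathlib

open MeasureTheory
open scoped ComplexOrder

/-- The open unit ellipsoid of a Hermitian matrix `A` on `ℂⁿ`. -/
def ellipsoid {n : ℕ} (A : Matrix (Fin n) (Fin n) ℂ) : Set (Fin n → ℂ) :=
  {X : Fin n → ℂ | (dotProduct (star X) (A.mulVec X)).re < 1}

namespace WuAux

/-- The real quadratic form of `A`. -/
noncomputable def Q {n : ℕ} (A : Matrix (Fin n) (Fin n) ℂ) (X : Fin n → ℂ) : ℝ :=
  (dotProduct (star X) (A.mulVec X)).re

lemma continuous_Q {n : ℕ} (A : Matrix (Fin n) (Fin n) ℂ) : Continuous (Q A) := by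
  apply Complex.continuous_re.comp
  simp only [dotProduct, Matrix.mulVec, Pi.star_apply]
  fun_prop

lemma mem_ellipsoid {n : ℕ} (A : Matrix (Fin n) (Fin n) ℂ) (X : Fin n → ℂ) :
    X ∈ ellipsoid A ↔ Q A X < 1 := Iff.rfl

lemma Q_pos {n : ℕ} {A : Matrix (Fin n) (Fin n) ℂ} (hA : A.PosDef) {X : Fin n → ℂ}
    (hX : X ≠ 0) : 0 < Q A X := by
  have := hA.dotProduct_mulVec_pos hX
  rw [Complex.lt_def] at this
  simpa [Q] using this.1

lemma Q_smul {n : ℕ} (A : Matrix (Fin n) (Fin n) ℂ) (t : ℝ) (X : Fin n → ℂ) :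
    Q A ((t : ℂ) • X) = t ^ 2 * Q A X := by
  simp only [Q, star_smul, Matrix.mulVec_smul, smul_dotProduct, dotProduct_smul]
  simp [smul_smul, ← Complex.ofReal_pow, Complex.re_ofReal_mul, Complex.ofReal_mul]
  ring

lemma Q_le_of_subset {n : ℕ} {A₁ A₂ : Matrix (Fin n) (Fin n) ℂ} (hA₂ : A₂.PosDef)
    (hsub : ellipsoid A₁ ⊆ ellipsoid A₂) (X : Fin n → ℂ) : Q A₂ X ≤ Q A₁ X := by
  rcases eq_or_ne X 0 with rfl | hX
  · simp [Q]
  · by_contra h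
    push_neg at h
    have h2 : 0 < Q A₂ X := Q_pos hA₂ hX
    set t := (Real.sqrt (Q A₂ X))⁻¹ with ht_def
    have ht : t ^ 2 * Q A₂ X = 1 := by
      rw [ht_def, inv_pow, Real.sq_sqrt h2.le, inv_mul_cancel₀ h2.ne']
    have htpos : 0 < t ^ 2 := by
      have : 0 < Real.sqrt (Q A₂ X) := Real.sqrt_pos.mpr h2
      positivity
    have h1 : (t : ℂ) • X ∈ ellipsoid A₁ := by
      rw [mem_ellipsoid, Q_smul]
      calc t ^ 2 * Q A₁ X < t ^ 2 * Q A₂ X := mul_lt_mul_of_pos_left h htpos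
        _ = 1 := ht
    have h3 := hsub h1
    rw [mem_ellipsoid, Q_smul, ht] at h3
    exact lt_irrefl 1 h3

/-- the conjugated matrix `D(l)ᴴ A D(l)`, written entrywise. -/
def Ml {n : ℕ} (l : Fin n → ℂ) (A : Matrix (Fin n) (Fin n) ℂ) : Matrix (Fin n) (Fin n) ℂ :=
  Matrix.of fun p q => star (l p) * A p q * l q

lemma Ml_quad {n : ℕ} (l : Fin n → ℂ) (A : Matrix (Fin n) (Fin n) ℂ) (X : Fin n → ℂ) :
    dotProduct (star X) ((Ml l A).mulVec X) =
      dotProduct (star fun j => l j * X j) (A.mulVec fun j => l j * X j) := by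
  simp only [dotProduct, Matrix.mulVec, Pi.star_apply, Ml, Matrix.of_apply,
    Finset.mul_sum, star_mul']
  refine Finset.sum_congr rfl fun p _ => Finset.sum_congr rfl fun q _ => by ring

lemma Ml_posDef {n : ℕ} {l : Fin n → ℂ} {A : Matrix (Fin n) (Fin n) ℂ} (hA : A.PosDef)
    (hl : ∀ j, l j ≠ 0) : (Ml l A).PosDef := by
  refine Matrix.PosDef.of_dotProduct_mulVec_pos ?_ ?_
  · ext p q
    simp only [Matrix.conjTranspose_apply, Ml, Matrix.of_apply, star_mul', star_star]
    rw [← hA.1.apply p q]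
    ring
  · intro X hX
    rw [Ml_quad]
    apply hA.dotProduct_mulVec_pos
    intro h
    apply hX
    funext j
    have := congrFun h j
    simpa [hl j] using this

lemma measurePreserving_mul_unit {n : ℕ} (l : Fin n → ℂ) (hl : ∀ j, ‖l j‖ = 1) :
    MeasurePreserving (fun (X : Fin n → ℂ) j => l j * X j) volume volume := by
  have h : ∀ j, MeasurePreserving (fun x : ℂ => l j * x) volume volume := by
    intro j
    have hc : l j ∈ Submonoid.unitSphere ℂ := by
      simpa [Submonoid.unitSphere, mem_sphere_zero_iff_norm] using hl j
    have := (rotation (⟨l j, hc⟩ : Circle)).measurePreserving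
    have h' : (fun x : ℂ => l j * x) = rotation ⟨l j, hc⟩ := by funext x; exact (rotation_apply (⟨l j, hc⟩ : Circle) x).symm
    rw [h']; exact this
  exact MeasureTheory.volume_preserving_pi h

/-- The sesquilinear form of `A`. -/
noncomputable def S {n : ℕ} (A : Matrix (Fin n) (Fin n) ℂ) (X Y : Fin n → ℂ) : ℂ :=
  dotProduct (star X) (A.mulVec Y)

lemma Q_eq_S {n : ℕ} (A : Matrix (Fin n) (Fin n) ℂ) (X : Fin n → ℂ) :
    Q A X = (S A X X).re := rfl

lemma S_add {n : ℕ} (A : Matrix (Fin n) (Fin n) ℂ) (X Y : Fin n → ℂ) :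
    S A (X + Y) (X + Y) = S A X X + S A X Y + S A Y X + S A Y Y := by
  simp only [S, star_add, Matrix.mulVec_add, add_dotProduct, dotProduct_add]
  ring

lemma star_single {n : ℕ} (j : Fin n) (c : ℂ) :
    star (Pi.single j c : Fin n → ℂ) = Pi.single j (star c) := by
  funext m
  rcases eq_or_ne m j with rfl | h
  · simp
  · simp [Pi.single_eq_of_ne h]

lemma S_single {n : ℕ} (A : Matrix (Fin n) (Fin n) ℂ) (j k : Fin n) (b c : ℂ) :
    S A (Pi.single j b) (Pi.single k c) = star b * A j k * c := by
  rw [S, star_single, Matrix.mulVec_single, single_dotProduct]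
  simp only [Pi.smul_apply, Matrix.col_apply, op_smul_eq_mul]
  ring

end WuAux

open WuAux

/-- If the unit ball `B = B_η(z₀)` of a pseudometric `η` at `z₀ ∈ D` is a bounded
Reinhardt domain, then the minimal-volume ellipsoid containing `B` (the unit ball of
`𝕎̃η(z₀;·)`) is a complete Reinhardt domain and is diagonal: there are `a₁,…,aₙ > 0`
with `𝕎̃η(z₀;X) = (∑ |X j|²/a j)^{1/2}`. -/
theorem wu_ellipsoid_diagonal (n : ℕ) (D : Set (Fin n → ℂ)) (hD : IsOpen D)
    (z₀ : Fin n → ℂ) (hz₀ : z₀ ∈ D)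
    (η : (Fin n → ℂ) → ℝ) (hηpos : ∀ X, 0 ≤ η X)
    (hηhom : ∀ (c : ℂ) X, η (c • X) = ‖c‖ * η X)
    (B : Set (Fin n → ℂ)) (hB : B = {X | η X < 1})
    (hBopen : IsOpen B) (hBbdd : Bornology.IsBounded B)
    (hBreinhardt : ∀ (l : Fin n → ℂ) (X : Fin n → ℂ), (∀ j, ‖l j‖ = 1) → X ∈ B →
      (fun j => l j * X j) ∈ B)
    (A : Matrix (Fin n) (Fin n) ℂ) (hA : A.PosDef)
    (hBA : B ⊆ ellipsoid A)
    (hmin : ∀ A' : Matrix (Fin n) (Fin n) ℂ, A'.PosDef → B ⊆ ellipsoid A' →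
      volume (ellipsoid A) ≤ volume (ellipsoid A'))
    (huniq : ∀ A' : Matrix (Fin n) (Fin n) ℂ, A'.PosDef → B ⊆ ellipsoid A' →
      volume (ellipsoid A') = volume (ellipsoid A) → ellipsoid A' = ellipsoid A) :
    (∀ (l : Fin n → ℂ) (X : Fin n → ℂ), (∀ j, ‖l j‖ ≤ 1) → X ∈ ellipsoid A →
      (fun j => l j * X j) ∈ ellipsoid A) ∧
    ∃ a : Fin n → ℝ, (∀ j, 0 < a j) ∧
      ellipsoid A = {X : Fin n → ℂ | ∑ j, ‖X j‖ ^ 2 / a j < 1} ∧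
      ∀ X : Fin n → ℂ, Real.sqrt ((dotProduct (star X) (A.mulVec X)).re) =
        Real.sqrt (∑ j, ‖X j‖ ^ 2 / a j) := by
  have hopen : IsOpen (ellipsoid A) := isOpen_lt (continuous_Q A) continuous_const
  -- Step 1: torus invariance of the quadratic form
  have hinv : ∀ (l : Fin n → ℂ), (∀ j, ‖l j‖ = 1) →
      ∀ X, Q A (fun j => l j * X j) = Q A X := by
    intro l hl
    have hl0 : ∀ j, l j ≠ 0 := by
      intro j h
      have := hl j
      rw [h] at this
      simp at this
    have hA' : (Ml l A).PosDef := Ml_posDef hA hl0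
    have hsub : B ⊆ ellipsoid (Ml l A) := by
      intro X hX
      have h1 : (fun j => l j * X j) ∈ ellipsoid A := hBA (hBreinhardt l X hl hX)
      show (dotProduct (star X) ((Ml l A).mulVec X)).re < 1
      rw [Ml_quad]
      exact h1
    have hpre : ellipsoid (Ml l A) = (fun (X : Fin n → ℂ) j => l j * X j) ⁻¹' ellipsoid A := by
      ext X
      simp only [ellipsoid, Set.mem_setOf_eq, Set.mem_preimage, Ml_quad]
    have hvol : volume (ellipsoid (Ml l A)) = volume (ellipsoid A) := by
      rw [hpre]
      exact (measurePreserving_mul_unit l hl).measure_preimage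
        hopen.measurableSet.nullMeasurableSet
    have heq := huniq (Ml l A) hA' hsub hvol
    intro X
    have h1 : Q (Ml l A) X = Q A X :=
      le_antisymm (Q_le_of_subset hA' heq.ge X) (Q_le_of_subset hA heq.le X)
    have h2 : Q (Ml l A) X = Q A (fun j => l j * X j) := by
      unfold Q
      rw [Ml_quad]
    rw [← h2, h1]
  -- Step 2: off-diagonal entries vanish
  have hdiag : ∀ j k, j ≠ k → A j k = 0 := by
    intro j k hjk
    have hl : ∀ m, ‖(if m = k then (-1 : ℂ) else 1)‖ = 1 := by
      intro m
      by_cases h : m = k <;> simp [h]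
    have key : ∀ c : ℂ, (A j k * c + star c * A k j).re = 0 := by
      intro c
      have e1 : ∀ d : ℂ, Q A (Pi.single j 1 + Pi.single k d)
          = (A j j + A j k * d + star d * A k j + star d * A k k * d).re := by
        intro d
        rw [Q_eq_S, S_add, S_single, S_single, S_single, S_single]
        simp
      have h1 := hinv (fun m => if m = k then (-1 : ℂ) else 1) hl
        (Pi.single j 1 + Pi.single k c)
      have h2 : (fun m => (if m = k then (-1 : ℂ) else 1) * ((Pi.single j (1:ℂ) + Pi.single k c : Fin n → ℂ) m))
          = Pi.single j (1:ℂ) + Pi.single k (-c) := by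
        funext m
        rcases eq_or_ne m k with rfl | hm
        · simp [Pi.single_eq_of_ne (Ne.symm hjk)]
        · simp [hm, Pi.single_eq_of_ne hm]
      rw [h2, e1 c, e1 (-c)] at h1
      simp only [star_neg, mul_neg, neg_mul, neg_neg, Complex.add_re, Complex.neg_re] at h1 ⊢
      linarith
    have hk := key (star (A j k))
    rw [← hA.1.apply k j] at hk
    have hns : Complex.normSq (A j k) = 0 := by
      simp only [Complex.star_def, Complex.conj_conj, Complex.mul_conj, Complex.add_re,
        Complex.ofReal_re] at hk
      linarith [Complex.normSq_nonneg (A j k)]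
    exact Complex.normSq_eq_zero.mp hns
  -- Step 3: diagonal form
  have hmv : ∀ (X : Fin n → ℂ) p, A.mulVec X p = A p p * X p := by
    intro X p
    rw [Matrix.mulVec, dotProduct]
    refine Finset.sum_eq_single p (fun q _ hq => ?_) (fun h => absurd (Finset.mem_univ p) h)
    rw [hdiag p q (Ne.symm hq), zero_mul]
  have hApos : ∀ p, 0 < (A p p).re := by
    intro p
    have hne : (Pi.single p 1 : Fin n → ℂ) ≠ 0 := by
      intro h
      have := congrFun h p
      simp at this
    have h := Q_pos hA hne
    rw [Q_eq_S, S_single] at h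
    simpa using h
  have hform : ∀ X : Fin n → ℂ, Q A X = ∑ p, (A p p).re * ‖X p‖ ^ 2 := by
    intro X
    unfold WuAux.Q
    rw [dotProduct, Complex.re_sum]
    refine Finset.sum_congr rfl fun p _ => ?_
    rw [hmv]
    have h1 : (star X p) * (A p p * X p) = A p p * ((Complex.normSq (X p) : ℝ) : ℂ) := by
      rw [Pi.star_apply, Complex.star_def, ← Complex.mul_conj]
      ring
    rw [h1]
    simp [Complex.mul_re, Complex.normSq_eq_norm_sq, ← Complex.ofReal_pow]
  have hform2 : ∀ X : Fin n → ℂ, Q A X = ∑ p, ‖X p‖ ^ 2 / ((A p p).re)⁻¹ := by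
    intro X
    rw [hform]
    exact Finset.sum_congr rfl fun p _ => by rw [div_eq_mul_inv, inv_inv, mul_comm]
  constructor
  · intro l X hl hX
    rw [mem_ellipsoid] at hX ⊢
    rw [hform] at hX ⊢
    refine lt_of_le_of_lt ?_ hX
    refine Finset.sum_le_sum fun p _ => ?_
    have h1 : ‖l p * X p‖ ^ 2 ≤ ‖X p‖ ^ 2 := by
      rw [norm_mul, mul_pow]
      calc ‖l p‖ ^ 2 * ‖X p‖ ^ 2 ≤ 1 * ‖X p‖ ^ 2 :=
            mul_le_mul_of_nonneg_right (pow_le_one₀ (norm_nonneg _) (hl p)) (sq_nonneg _)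
        _ = ‖X p‖ ^ 2 := one_mul _
    exact mul_le_mul_of_nonneg_left h1 (hApos p).le
  · refine ⟨fun p => ((A p p).re)⁻¹, fun p => inv_pos.mpr (hApos p), ?_, ?_⟩
    · ext X
      simp only [ellipsoid, Set.mem_setOf_eq]
      rw [show (dotProduct (star X) (A.mulVec X)).re = Q A X from rfl, hform2]
    · intro X
      rw [show (dotProduct (star X) (A.mulVec X)).re = Q A X from rfl, hform2]
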